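/- Let d be a positive integer, α ∈ (0,2), β > 0, s ∈ [0,d], and let μ be a nonzero finite Borel measure on ℝ^d with compact support S satisfying condition (F2)-s with constant C̲. Fix R > 0 and c₃ > 0. Then there exists Λ₀ > 0 such that for every k ≥ Λ₀ and every (t,x) with t > 0 and d(x,S) < t^{1/α} R, one has h_k(t,x)^{1+β} ≥ c₃ · k · t^{-1/β − 1} · μ(B(x, t^{1/α} R)) / min(t^{s/α}, 1). -/

import Mathlib

open MeasureTheory Metric Set Filter Topology

/-- The profile function `W(r) = log(e + r²)/(1 + r^{d+α})`. -/
noncomputable def Wfn (d : ℕ) (α r : ℝ) : ℝ :=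
  Real.log (Real.exp 1 + r ^ 2) / (1 + r ^ ((d : ℝ) + α))

/-- `w_t(x) = t^{-1/β}(1 + t^{-s/α}) W(t^{-1/α}|x|)`. -/
noncomputable def wfn (d : ℕ) (α β s t : ℝ) (x : EuclideanSpace ℝ (Fin d)) : ℝ :=
  t ^ (-(1:ℝ)/β) * (1 + t ^ (-s/α)) * Wfn d α (t ^ (-(1:ℝ)/α) * ‖x‖)

/-- `h_k(t,x) = k ∫ w_t(x - y) dμ(y)`. -/
noncomputable def hfn (d : ℕ) (α β s : ℝ) (μ : Measure (EuclideanSpace ℝ (Fin d)))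
    (k t : ℝ) (x : EuclideanSpace ℝ (Fin d)) : ℝ :=
  k * ∫ y, wfn d α β s t (x - y) ∂μ

/-- `S` is the closed support of `μ`. -/
def IsSupportOf (d : ℕ) (μ : Measure (EuclideanSpace ℝ (Fin d)))
    (S : Set (EuclideanSpace ℝ (Fin d))) : Prop :=
  IsClosed S ∧ μ Sᶜ = 0 ∧ ∀ x ∈ S, ∀ r : ℝ, 0 < r → 0 < μ (ball x r)

/-- Condition (F2)-s with constant `Cund` on the set `S`. -/
def IsF2 (d : ℕ) (μ : Measure (EuclideanSpace ℝ (Fin d)))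
    (S : Set (EuclideanSpace ℝ (Fin d))) (Cund s : ℝ) : Prop :=
  ∀ x ∈ S, ∀ r : ℝ, 0 < r → r ≤ 1 →
    ENNReal.ofReal (Cund * r ^ s) ≤ μ (closedBall x r)

lemma Wfn_nonneg (d : ℕ) {α r : ℝ} (hr : 0 ≤ r) : 0 ≤ Wfn d α r := by
  unfold Wfn
  apply div_nonneg
  · apply Real.log_nonneg
    nlinarith [Real.exp_one_gt_d9, sq_nonneg r]
  · have := Real.rpow_nonneg hr ((d:ℝ)+α); linarith

lemma Wfn_lower (d : ℕ) {α K r : ℝ} (hα : 0 < α) (hr0 : 0 ≤ r) (hrK : r ≤ K) :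
    1 / (1 + K ^ ((d:ℝ)+α)) ≤ Wfn d α r := by
  have hp : (0:ℝ) < (d:ℝ) + α := by positivity
  have hK0 : 0 ≤ K := le_trans hr0 hrK
  have hden : (0:ℝ) < 1 + r ^ ((d:ℝ)+α) := by
    have := Real.rpow_nonneg hr0 ((d:ℝ)+α); linarith
  have h1 : 1 + r ^ ((d:ℝ)+α) ≤ 1 + K ^ ((d:ℝ)+α) := by
    have := Real.rpow_le_rpow hr0 hrK hp.le; linarith
  have hnum : (1:ℝ) ≤ Real.log (Real.exp 1 + r ^ 2) := by
    have h2 : Real.exp 1 ≤ Real.exp 1 + r ^ 2 := by nlinarith [sq_nonneg r]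
    calc (1:ℝ) = Real.log (Real.exp 1) := (Real.log_exp 1).symm
    _ ≤ _ := Real.log_le_log (Real.exp_pos 1) h2
  calc 1 / (1 + K ^ ((d:ℝ)+α)) ≤ 1 / (1 + r ^ ((d:ℝ)+α)) :=
        one_div_le_one_div_of_le hden h1
  _ ≤ Wfn d α r := (div_le_div_iff_of_pos_right hden).mpr hnum

lemma Wfn_comp_cont {d : ℕ} {α c : ℝ} (hα : 0 < α) (hc : 0 ≤ c)
    (x : EuclideanSpace ℝ (Fin d)) :
    Continuous fun y : EuclideanSpace ℝ (Fin d) => Wfn d α (c * ‖x - y‖) := by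
  have hp : (0:ℝ) < (d:ℝ) + α := by positivity
  have hb : Continuous fun y : EuclideanSpace ℝ (Fin d) => c * ‖x - y‖ :=
    continuous_const.mul ((continuous_const.sub continuous_id).norm)
  have hrpow : Continuous fun r : ℝ => r ^ ((d:ℝ)+α) :=
    continuous_iff_continuousAt.mpr fun r => Real.continuousAt_rpow_const r _ (Or.inr hp.le)
  unfold Wfn
  apply Continuous.div
  · exact (continuous_const.add (hb.pow 2)).log (fun y => (add_pos_of_pos_of_nonneg (Real.exp_pos 1) (sq_nonneg _)).ne')
  · exact continuous_const.add (hrpow.comp hb)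
  · intro y
    have : 0 ≤ (c * ‖x - y‖) ^ ((d:ℝ)+α) := Real.rpow_nonneg (by positivity) _
    positivity

lemma integral_lb {d : ℕ} (μ : Measure (EuclideanSpace ℝ (Fin d))) [IsFiniteMeasure μ]
    {S : Set (EuclideanSpace ℝ (Fin d))} (hScpt : IsCompact S) (hS0 : μ Sᶜ = 0)
    {f : EuclideanSpace ℝ (Fin d) → ℝ} (hf : Continuous f) (hf0 : ∀ y, 0 ≤ f y)
    {B : Set (EuclideanSpace ℝ (Fin d))} (hB : MeasurableSet B)
    {c : ℝ} (hc : ∀ y ∈ B, c ≤ f y) :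
    c * (μ B).toReal ≤ ∫ y, f y ∂μ := by
  obtain ⟨C, hC⟩ := hScpt.exists_bound_of_continuousOn hf.continuousOn
  have haeS : ∀ᵐ y ∂μ, y ∈ S := by
    rw [ae_iff]; exact hS0
  have hint : Integrable f μ := by
    refine (integrable_const C).mono' hf.aestronglyMeasurable ?_
    filter_upwards [haeS] with y hy using hC y hy
  have hind : Integrable (B.indicator fun _ => c) μ := (integrable_const c).indicator hB
  have hle : ∀ y, B.indicator (fun _ => c) y ≤ f y := by
    intro y
    by_cases hy : y ∈ B
    · simpa [Set.indicator_of_mem hy] using hc y hy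
    · simpa [Set.indicator_of_notMem hy] using hf0 y
  calc c * (μ B).toReal = ∫ y, B.indicator (fun _ => c) y ∂μ := by
        rw [integral_indicator_const _ hB, smul_eq_mul, mul_comm]; rfl
  _ ≤ _ := integral_mono hind hint hle

set_option maxHeartbeats 1000000 in
/-- Inner-region estimate: for `k` large, the nonlinear term dominates:
`h_k(t,x)^{1+β} ≥ c₃ k t^{-1/β-1} μ(B(x, t^{1/α}R)) / min(t^{s/α},1)` whenever
`d(x,S) < t^{1/α} R`. -/
theorem stmt_9 (d : ℕ) (hd : 0 < d) (α β s : ℝ) (hα : α ∈ Ioo (0:ℝ) 2)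
    (hβ : 0 < β) (hs : s ∈ Icc (0:ℝ) (d:ℝ))
    (μ : Measure (EuclideanSpace ℝ (Fin d))) [IsFiniteMeasure μ] (hμ : μ ≠ 0)
    (S : Set (EuclideanSpace ℝ (Fin d))) (hScpt : IsCompact S)
    (hSsupp : IsSupportOf d μ S)
    (Cund : ℝ) (hCund : 0 < Cund) (hF2 : IsF2 d μ S Cund s)
    (R : ℝ) (hR : 0 < R) (c₃ : ℝ) (hc₃ : 0 < c₃) :
    ∃ Λ₀ > (0:ℝ), ∀ k : ℝ, Λ₀ ≤ k → ∀ t > (0:ℝ), ∀ x : EuclideanSpace ℝ (Fin d),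
      infDist x S < t ^ ((1:ℝ)/α) * R →
      c₃ * k * t ^ (-(1:ℝ)/β - 1) *
          ((μ (closedBall x (t ^ ((1:ℝ)/α) * R))).toReal / min (t ^ (s/α)) 1) ≤
        hfn d α β s μ k t x ^ (1 + β) := by
  obtain ⟨hα0, hα2⟩ := hα
  obtain ⟨hScl, hS0, -⟩ := hSsupp
  obtain ⟨hs0, -⟩ := hs
  have hp : (0:ℝ) < (d:ℝ) + α := by positivity
  -- S is nonempty, μ has positive total mass
  have hSne : S.Nonempty := by
    rcases S.eq_empty_or_nonempty with h | h
    · exfalso; apply hμ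
      apply Measure.measure_univ_eq_zero.mp
      have h2 := hS0; rw [h] at h2; simpa using h2
    · exact h
  have hμuniv : μ Set.univ ≠ 0 := fun h => hμ (Measure.measure_univ_eq_zero.mp h)
  set μtot := (μ Set.univ).toReal with hμtotdef
  have hμtot_pos : 0 < μtot := ENNReal.toReal_pos hμuniv (measure_ne_top μ _)
  have hμS : μ S = μ Set.univ := by
    have h := measure_add_measure_compl (μ := μ) hScl.measurableSet
    rw [hS0, add_zero] at h; exact h
  -- diameter bound
  obtain ⟨D0, hD0⟩ := Metric.isBounded_iff.mp hScpt.isBounded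
  set D := max D0 0 with hDdef
  have hD : ∀ a ∈ S, ∀ b ∈ S, dist a b ≤ D := fun a ha b hb =>
    le_trans (hD0 ha hb) (le_max_left _ _)
  have hD0' : (0:ℝ) ≤ D := le_max_right _ _
  -- constants
  set m₂ := 1 / (1 + R ^ ((d:ℝ)+α)) with hm₂def
  set m₃ := 1 / (1 + (R+1) ^ ((d:ℝ)+α)) with hm₃def
  set m₄ := 1 / (1 + (R+D) ^ ((d:ℝ)+α)) with hm₄def
  have hm₂0 : 0 < m₂ := by rw [hm₂def]; positivity
  have hm₃0 : 0 < m₃ := by rw [hm₃def]; positivity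
  have hm₄0 : 0 < m₄ := by rw [hm₄def]; positivity
  set c₀ := min (m₃ * Cund) (m₄ * μtot) with hc₀def
  have hc₀0 : 0 < c₀ := lt_min (by positivity) (by positivity)
  set X := c₀ ^ β * m₂ with hXdef
  have hX0 : 0 < X := mul_pos (Real.rpow_pos_of_pos hc₀0 β) hm₂0
  refine ⟨max 1 ((c₃ / X) ^ (1/β)), lt_of_lt_of_le one_pos (le_max_left _ _), ?_⟩
  intro k hk t ht x hx
  have hk1 : (1:ℝ) ≤ k := le_trans (le_max_left _ _) hk
  have hk0 : (0:ℝ) < k := lt_of_lt_of_le one_pos hk1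
  have hkβ : c₃ / X ≤ k ^ β := by
    have h1 : (c₃ / X) ^ (1/β) ≤ k := le_trans (le_max_right _ _) hk
    have h2 : ((c₃ / X) ^ (1/β)) ^ β ≤ k ^ β :=
      Real.rpow_le_rpow (Real.rpow_nonneg (by positivity) _) h1 hβ.le
    rwa [← Real.rpow_mul (by positivity), one_div_mul_cancel hβ.ne', Real.rpow_one] at h2
  -- geometry
  set ρ := t ^ ((1:ℝ)/α) * R with hρdef
  have htα : 0 < t ^ ((1:ℝ)/α) := Real.rpow_pos_of_pos ht _
  have hρ0 : 0 < ρ := mul_pos htα hR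
  obtain ⟨z, hzS, hzd⟩ := (Metric.infDist_lt_iff hSne).mp hx
  have hinv : t ^ (-(1:ℝ)/α) = (t ^ ((1:ℝ)/α))⁻¹ := by
    rw [neg_div, Real.rpow_neg ht.le]
  have htiα0 : (0:ℝ) < t ^ (-(1:ℝ)/α) := Real.rpow_pos_of_pos ht _
  -- the integrand
  set f := fun y : EuclideanSpace ℝ (Fin d) => wfn d α β s t (x - y) with hfdef
  set P := t ^ (-(1:ℝ)/β) * (1 + t ^ (-s/α)) with hPdef
  have htβ0 : (0:ℝ) < t ^ (-(1:ℝ)/β) := Real.rpow_pos_of_pos ht _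
  have htsα0 : (0:ℝ) < t ^ (-s/α) := Real.rpow_pos_of_pos ht _
  have htsα0' : (0:ℝ) < t ^ (s/α) := Real.rpow_pos_of_pos ht _
  have hP0 : 0 < P := by rw [hPdef]; positivity
  have hfeq : ∀ y, f y = P * Wfn d α (t ^ (-(1:ℝ)/α) * ‖x - y‖) := fun y => rfl
  have hcont : Continuous f := by
    rw [hfdef]; unfold wfn
    exact continuous_const.mul (Wfn_comp_cont hα0 htiα0.le x)
  have hf0 : ∀ y, 0 ≤ f y := by
    intro y
    rw [hfeq]
    exact mul_nonneg hP0.le (Wfn_nonneg d (by positivity))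
  -- pointwise bound helper
  have hptwise : ∀ (K : ℝ) (y : EuclideanSpace ℝ (Fin d)), 0 < K →
      ‖x - y‖ ≤ t ^ ((1:ℝ)/α) * K → P * (1 / (1 + K ^ ((d:ℝ)+α))) ≤ f y := by
    intro K y hK hyK
    rw [hfeq]
    refine mul_le_mul_of_nonneg_left ?_ hP0.le
    apply Wfn_lower d hα0 (by positivity)
    calc t ^ (-(1:ℝ)/α) * ‖x - y‖ ≤ t ^ (-(1:ℝ)/α) * (t ^ ((1:ℝ)/α) * K) :=
          mul_le_mul_of_nonneg_left hyK htiα0.le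
    _ = K := by rw [hinv]; field_simp
  -- lower bound on big ball
  set M := (μ (closedBall x ρ)).toReal with hMdef
  have hM0 : 0 ≤ M := ENNReal.toReal_nonneg
  have hIbig : P * m₂ * M ≤ ∫ y, f y ∂μ := by
    apply integral_lb μ hScpt hS0 hcont hf0 measurableSet_closedBall
    intro y hy
    exact hptwise R y hR (by
      have : dist y x ≤ ρ := hy
      rw [← hρdef]
      calc ‖x - y‖ = dist x y := by rw [dist_eq_norm]
      _ ≤ ρ := by rw [dist_comm]; exact this)
  -- lower bound  I ≥ t^{-1/β} c₀ , case analysis on t ≤ 1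
  have hA : t ^ (-(1:ℝ)/β) * c₀ ≤ ∫ y, f y ∂μ := by
    rcases le_total t 1 with ht1 | ht1
    · -- small t : use F2 at z with radius t^{1/α}
      have hr1 : t ^ ((1:ℝ)/α) ≤ 1 := Real.rpow_le_one ht.le ht1 (by positivity)
      have hF := hF2 z hzS (t ^ ((1:ℝ)/α)) htα hr1
      have hrs : (t ^ ((1:ℝ)/α)) ^ s = t ^ (s/α) := by
        rw [← Real.rpow_mul ht.le]; congr 1; field_simp
      have hμball : Cund * t ^ (s/α) ≤ (μ (closedBall z (t ^ ((1:ℝ)/α)))).toReal := by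
        have h1 := ENNReal.toReal_mono (measure_ne_top μ _) hF
        rwa [ENNReal.toReal_ofReal (by positivity), hrs] at h1
      have hIsmall : P * m₃ * (Cund * t ^ (s/α)) ≤ ∫ y, f y ∂μ := by
        have hint := integral_lb μ hScpt hS0 hcont hf0
          (measurableSet_closedBall (x := z) (ε := t ^ ((1:ℝ)/α)))
          (c := P * m₃) (fun y hy => by
            apply hptwise (R + 1) y (by positivity)
            have hyz : dist y z ≤ t ^ ((1:ℝ)/α) := hy
            calc ‖x - y‖ = dist x y := by rw [dist_eq_norm]
            _ ≤ dist x z + dist z y := dist_triangle x z y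
            _ ≤ ρ + t ^ ((1:ℝ)/α) := by
                rw [dist_comm z y]
                exact add_le_add hzd.le hyz
            _ = t ^ ((1:ℝ)/α) * (R + 1) := by rw [hρdef]; ring)
        calc P * m₃ * (Cund * t ^ (s/α))
            ≤ P * m₃ * (μ (closedBall z (t ^ ((1:ℝ)/α)))).toReal :=
              mul_le_mul_of_nonneg_left hμball (by positivity)
        _ ≤ _ := hint
      calc t ^ (-(1:ℝ)/β) * c₀ ≤ t ^ (-(1:ℝ)/β) * (m₃ * Cund) :=
            mul_le_mul_of_nonneg_left (min_le_left _ _) htβ0.le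
      _ ≤ P * m₃ * (Cund * t ^ (s/α)) := by
            have h1 : t ^ (-s/α) * t ^ (s/α) = 1 := by
              rw [← Real.rpow_add ht, show -s/α + s/α = 0 by ring, Real.rpow_zero]
            have h2 : P * m₃ * (Cund * t ^ (s/α))
                = t ^ (-(1:ℝ)/β) * (m₃ * Cund) * (t ^ (s/α) + t ^ (-s/α) * t ^ (s/α)) := by
              rw [hPdef]; ring
            rw [h2, h1]
            exact le_mul_of_one_le_right (mul_pos htβ0 (mul_pos hm₃0 hCund)).le
              (by linarith [htsα0'.le])
      _ ≤ _ := hIsmall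
    · -- large t : integrate over S
      have htiα1 : t ^ (-(1:ℝ)/α) ≤ 1 :=
        Real.rpow_le_one_of_one_le_of_nonpos ht1
          (by rw [neg_div]; exact neg_nonpos.mpr (by positivity))
      have hIS : P * m₄ * μtot ≤ ∫ y, f y ∂μ := by
        have hint := integral_lb μ hScpt hS0 hcont hf0 hScl.measurableSet
          (c := P * m₄) (fun y hy => by
            rw [hfeq]
            refine mul_le_mul_of_nonneg_left ?_ hP0.le
            apply Wfn_lower d hα0 (by positivity)
            have hxy : ‖x - y‖ ≤ ρ + D := by
              calc ‖x - y‖ = dist x y := by rw [dist_eq_norm]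
              _ ≤ dist x z + dist z y := dist_triangle x z y
              _ ≤ ρ + D := add_le_add hzd.le (hD z hzS y hy)
            calc t ^ (-(1:ℝ)/α) * ‖x - y‖ ≤ t ^ (-(1:ℝ)/α) * (ρ + D) :=
                  mul_le_mul_of_nonneg_left hxy htiα0.le
            _ = R * (t ^ (-(1:ℝ)/α) * t ^ ((1:ℝ)/α)) + t ^ (-(1:ℝ)/α) * D := by
                  rw [hρdef]; ring
            _ ≤ R + D := by
                  have h1 : t ^ (-(1:ℝ)/α) * t ^ ((1:ℝ)/α) = 1 := by
                    rw [← Real.rpow_add ht, show -(1:ℝ)/α + 1/α = 0 by ring,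
                      Real.rpow_zero]
                  rw [h1]
                  have := mul_le_of_le_one_left hD0' htiα1
                  linarith)
        rw [hμS] at hint
        exact hint
      calc t ^ (-(1:ℝ)/β) * c₀ ≤ t ^ (-(1:ℝ)/β) * (m₄ * μtot) :=
            mul_le_mul_of_nonneg_left (min_le_right _ _) htβ0.le
      _ ≤ P * m₄ * μtot := by
            have h2 : P * m₄ * μtot
                = t ^ (-(1:ℝ)/β) * (m₄ * μtot) * (1 + t ^ (-s/α)) := by
              rw [hPdef]; ring
            rw [h2]
            exact le_mul_of_one_le_right (mul_pos htβ0 (mul_pos hm₄0 hμtot_pos)).le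
              (by linarith [htsα0.le])
      _ ≤ _ := hIS
  -- lower bound with the min
  set minv := min (t ^ (s/α)) 1 with hminvdef
  have hminv0 : 0 < minv := lt_min htsα0' one_pos
  have hmin : 1 / minv ≤ 1 + t ^ (-s/α) := by
    have hts : t ^ (-s/α) * t ^ (s/α) = 1 := by
      rw [← Real.rpow_add ht, show -s/α + s/α = 0 by ring, Real.rpow_zero]
    rcases le_total (t ^ (s/α)) 1 with h | h
    · rw [hminvdef, min_eq_left h]
      rw [div_le_iff₀ htsα0']
      nlinarith
    · rw [hminvdef, min_eq_right h, div_one]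
      linarith [htsα0.le]
  have hB : t ^ (-(1:ℝ)/β) * (m₂ * M) / minv ≤ ∫ y, f y ∂μ := by
    calc t ^ (-(1:ℝ)/β) * (m₂ * M) / minv
        = (t ^ (-(1:ℝ)/β) * (m₂ * M)) * (1 / minv) := by ring
    _ ≤ (t ^ (-(1:ℝ)/β) * (m₂ * M)) * (1 + t ^ (-s/α)) :=
        mul_le_mul_of_nonneg_left hmin (by positivity)
    _ = P * m₂ * M := by rw [hPdef]; ring
    _ ≤ _ := hIbig
  -- final computation
  set I := ∫ y, f y ∂μ with hIdef
  have ha : k * (t ^ (-(1:ℝ)/β) * c₀) ≤ k * I := mul_le_mul_of_nonneg_left hA hk0.le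
  have ha0 : 0 < k * (t ^ (-(1:ℝ)/β) * c₀) := by positivity
  have hkI0 : 0 < k * I := lt_of_lt_of_le ha0 ha
  have hb : k * (t ^ (-(1:ℝ)/β) * (m₂ * M) / minv) ≤ k * I :=
    mul_le_mul_of_nonneg_left hB hk0.le
  have hpowβ : (t ^ (-(1:ℝ)/β)) ^ β = t ^ (-(1:ℝ)) := by
    rw [← Real.rpow_mul ht.le]
    congr 1; field_simp
  have haβ : (k * (t ^ (-(1:ℝ)/β) * c₀)) ^ β = k ^ β * (t ^ (-(1:ℝ)) * c₀ ^ β) := by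
    rw [Real.mul_rpow hk0.le (by positivity), Real.mul_rpow htβ0.le hc₀0.le, hpowβ]
  have hX2 : c₃ ≤ k ^ β * X := by
    have := (div_le_iff₀ hX0).mp hkβ
    linarith [this]
  have hsplit : t ^ (-(1:ℝ)/β - 1) = t ^ (-(1:ℝ)/β) * t ^ (-(1:ℝ)) := by
    rw [show (-(1:ℝ)/β - 1) = (-(1:ℝ)/β) + (-1) by ring, Real.rpow_add ht]
  show c₃ * k * t ^ (-(1:ℝ)/β - 1) * (M / minv) ≤ (k * I) ^ (1 + β)
  have hmain : (k * (t ^ (-(1:ℝ)/β) * (m₂ * M) / minv)) *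
      ((k * (t ^ (-(1:ℝ)/β) * c₀)) ^ β) ≤ (k * I) ^ (1 + β) := by
    calc (k * (t ^ (-(1:ℝ)/β) * (m₂ * M) / minv)) * ((k * (t ^ (-(1:ℝ)/β) * c₀)) ^ β)
        ≤ (k * I) * ((k * I) ^ β) :=
          mul_le_mul hb (Real.rpow_le_rpow ha0.le ha hβ.le)
            (Real.rpow_nonneg ha0.le _) hkI0.le
    _ = (k * I) ^ (1 + β) := by rw [Real.rpow_add hkI0, Real.rpow_one]
  refine le_trans ?_ hmain
  rw [haβ, hsplit]
  have hfac0 : 0 ≤ k * t ^ (-(1:ℝ)/β) * t ^ (-(1:ℝ)) * (M / minv) := by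
    have h1 : (0:ℝ) < t ^ (-(1:ℝ)) := Real.rpow_pos_of_pos ht _
    exact mul_nonneg (by positivity) (div_nonneg hM0 hminv0.le)
  calc c₃ * k * (t ^ (-(1:ℝ)/β) * t ^ (-(1:ℝ))) * (M / minv)
      = c₃ * (k * t ^ (-(1:ℝ)/β) * t ^ (-(1:ℝ)) * (M / minv)) := by ring
  _ ≤ (k ^ β * X) * (k * t ^ (-(1:ℝ)/β) * t ^ (-(1:ℝ)) * (M / minv)) :=
      mul_le_mul_of_nonneg_right hX2 hfac0
  _ = (k * (t ^ (-(1:ℝ)/β) * (m₂ * M) / minv)) * (k ^ β * (t ^ (-(1:ℝ)) * c₀ ^ β)) := by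
      rw [hXdef]; ring
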